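/- Let U ⊆ V = ℂ^{2N} be a complex subspace with zU ⊆ U and U ⊆ im(z). Then the subspace z^{-1}U ∩ U^⊥ of V is two-dimensional and the restriction of C to z^{-1}U ∩ U^⊥ is a unitary isomorphism onto ℂ², i.e. a bijective linear map preserving the Hermitian inner products. -/

import Mathlib

noncomputable section
namespace Spr

/-! ### Linear algebra setup -/

abbrev Vsp (N : ℕ) := EuclideanSpace ℂ (Fin (2*N))
abbrev C2 := EuclideanSpace ℂ (Fin 2)

/-- The basis vector `e_i` (1-based index). -/
def eVec (N i : ℕ) : Vsp N :=
  if h : 1 ≤ i ∧ i ≤ N then EuclideanSpace.single (⟨i-1, by omega⟩ : Fin (2*N)) 1 else 0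

/-- The basis vector `f_i` (1-based index). -/
def fVec (N i : ℕ) : Vsp N :=
  if h : 1 ≤ i ∧ i ≤ N then EuclideanSpace.single (⟨N+i-1, by omega⟩ : Fin (2*N)) 1 else 0

/-- The standard basis vector `e` of `ℂ²`. -/
def eStd : C2 := EuclideanSpace.single 0 1
/-- The standard basis vector `f` of `ℂ²`. -/
def fStd : C2 := EuclideanSpace.single 1 1

/-- The nilpotent endomorphism `z` with two equal Jordan blocks:
`z e_1 = 0 = z f_1`, `z e_{i+1} = e_i`, `z f_{i+1} = f_i`. -/
def zMap (N : ℕ) : Vsp N →ₗ[ℂ] Vsp N where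
  toFun v := WithLp.toLp 2 (fun j : Fin (2*N) =>
    if h : j.val + 1 < 2*N ∧ j.val + 1 ≠ N then v ⟨j.val+1, h.1⟩ else 0)
  map_add' v w := by
    ext j
    by_cases h : j.val + 1 < 2*N ∧ j.val + 1 ≠ N <;> simp [h, PiLp.add_apply]
  map_smul' c v := by
    ext j
    by_cases h : j.val + 1 < 2*N ∧ j.val + 1 ≠ N <;> simp [h, PiLp.smul_apply]

def cIdx (N : ℕ) (j : Fin 2) (i : Fin N) : Fin (2*N) :=
  ⟨if j.val = 0 then i.val else N + i.val, by have := i.isLt; split <;> omega⟩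

/-- The linear map `C : ℂ^{2N} → ℂ²`, `e_i ↦ e`, `f_i ↦ f`. -/
def Cmap (N : ℕ) : Vsp N →ₗ[ℂ] C2 where
  toFun v := WithLp.toLp 2 (fun j : Fin 2 => ∑ i : Fin N, v (cIdx N j i))
  map_add' v w := by
    ext j
    simp [PiLp.add_apply, Finset.sum_add_distrib]
  map_smul' c v := by
    ext j
    simp [PiLp.smul_apply, Finset.mul_sum]

/-- The subspace `E_{a,b} = span(e_1,…,e_a,f_1,…,f_b)`. -/
def Esub (N a b : ℕ) : Submodule ℂ (Vsp N) :=
  Submodule.span ℂ ((eVec N '' Set.Icc 1 a) ∪ (fVec N '' Set.Icc 1 b))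

/-- Gram coefficients of the symmetric bilinear form `β_D^{2m-k,k}`. -/
def cD (N m k : ℕ) (p q : Fin (2*N)) : ℂ :=
  if k = m then
    (if p.val < N ∧ N ≤ q.val then
      (if (p.val + 1) + (q.val - N + 1) = k + 1 then (-1:ℂ)^(q.val - N) else 0)
    else if N ≤ p.val ∧ q.val < N then
      (if (p.val - N + 1) + (q.val + 1) = k + 1 then (-1:ℂ)^(p.val - N) else 0)
    else 0)
  else
    (if p.val < N ∧ q.val < N then
      (if (p.val + 1) + (q.val + 1) = 2*m - k + 1 then (-1:ℂ)^(p.val) else 0)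
    else if N ≤ p.val ∧ N ≤ q.val then
      (if (p.val - N + 1) + (q.val - N + 1) = k + 1 then (-1:ℂ)^(p.val - N + 1) else 0)
    else 0)

/-- Gram coefficients of the symplectic bilinear form `β_C^{2m-k-1,k-1}`. -/
def cC (N m k : ℕ) (p q : Fin (2*N)) : ℂ :=
  if k = m then
    (if N ≤ p.val ∧ q.val < N then
      (if (p.val - N + 1) + (q.val + 1) = k then (-1:ℂ)^(p.val - N) else 0)
    else if p.val < N ∧ N ≤ q.val then
      (if (p.val + 1) + (q.val - N + 1) = k then -(-1:ℂ)^(q.val - N) else 0)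
    else 0)
  else
    (if p.val < N ∧ q.val < N then
      (if (p.val + 1) + (q.val + 1) = 2*m - k ∧ p.val < q.val then (-1:ℂ)^(p.val + 1)
       else if (p.val + 1) + (q.val + 1) = 2*m - k ∧ q.val < p.val then (-1:ℂ)^(p.val)
       else 0)
    else if N ≤ p.val ∧ N ≤ q.val then
      (if (p.val - N + 1) + (q.val - N + 1) = k ∧ p.val < q.val then (-1:ℂ)^(p.val - N)
       else if (p.val - N + 1) + (q.val - N + 1) = k ∧ q.val < p.val then (-1:ℂ)^(p.val - N + 1)
       else 0)
    else 0)

/-- The bilinear pairing associated to a matrix `c` of coefficients. -/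
def bFormFun (N : ℕ) (c : Fin (2*N) → Fin (2*N) → ℂ) (v w : Vsp N) : ℂ :=
  ∑ p : Fin (2*N), ∑ q : Fin (2*N), v p * (c p q * w q)

/-- The symmetric bilinear form `β_D^{2m-k,k}` (extended by zero to all of `ℂ^{2N}`). -/
def betaD (N m k : ℕ) : Vsp N → Vsp N → ℂ := bFormFun N (cD N m k)

/-- The symplectic bilinear form `β_C^{2m-k-1,k-1}` (extended by zero to all of `ℂ^{2N}`). -/
def betaC (N m k : ℕ) : Vsp N → Vsp N → ℂ := bFormFun N (cC N m k)

/-- A subspace is isotropic with respect to a bilinear form. -/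
def IsIsotropic {N : ℕ} (B : Vsp N → Vsp N → ℂ) (W : Submodule ℂ (Vsp N)) : Prop :=
  ∀ v ∈ W, ∀ w ∈ W, B v w = 0

lemma bFormFun_add_left {N : ℕ} (c : Fin (2*N) → Fin (2*N) → ℂ) (v v' w : Vsp N) :
    bFormFun N c (v + v') w = bFormFun N c v w + bFormFun N c v' w := by
  simp [bFormFun, PiLp.add_apply, add_mul, Finset.sum_add_distrib]

lemma bFormFun_smul_left {N : ℕ} (c : Fin (2*N) → Fin (2*N) → ℂ) (s : ℂ) (v w : Vsp N) :
    bFormFun N c (s • v) w = s * bFormFun N c v w := by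
  simp [bFormFun, PiLp.smul_apply, smul_eq_mul, mul_assoc, Finset.mul_sum]

lemma bFormFun_zero_left {N : ℕ} (c : Fin (2*N) → Fin (2*N) → ℂ) (w : Vsp N) :
    bFormFun N c 0 w = 0 := by
  simp [bFormFun]

/-- `{v ∈ E | ∀ w ∈ F, B(v,w) = 0}` for the bilinear form with coefficients `c`. -/
def perpB (N : ℕ) (c : Fin (2*N) → Fin (2*N) → ℂ) (E F : Submodule ℂ (Vsp N)) :
    Submodule ℂ (Vsp N) where
  carrier := {v | v ∈ E ∧ ∀ w ∈ F, bFormFun N c v w = 0}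
  add_mem' := by
    rintro x y ⟨hxE, hx⟩ ⟨hyE, hy⟩
    exact ⟨E.add_mem hxE hyE, fun w hw => by
      rw [bFormFun_add_left, hx w hw, hy w hw, add_zero]⟩
  zero_mem' := ⟨E.zero_mem, fun w hw => bFormFun_zero_left c w⟩
  smul_mem' := by
    rintro s x ⟨hxE, hx⟩
    exact ⟨E.smul_mem s hxE, fun w hw => by
      rw [bFormFun_smul_left, hx w hw, mul_zero]⟩

/-- `F^{⊥_D}`, the orthogonal of `F` inside `E_{2m-k,k}` with respect to `β_D`. -/
def perpD (N m k : ℕ) (F : Submodule ℂ (Vsp N)) : Submodule ℂ (Vsp N) :=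
  perpB N (cD N m k) (Esub N (2*m-k) k) F

/-- `F^{⊥_C}`, the orthogonal of `F` inside `E_{2m-k-1,k-1}` with respect to `β_C`. -/
def perpC (N m k : ℕ) (F : Submodule ℂ (Vsp N)) : Submodule ℂ (Vsp N) :=
  perpB N (cC N m k) (Esub N (2*m-k-1) (k-1)) F

/-- Membership in the Cautis–Kamnitzer variety `Y`: a flag `F_0 ⊆ F_1 ⊆ … ⊆ F_{len-1}` with
`F_0 = 0`, `dim F_i = i`, and `z F_i ⊆ F_{i-1}`. -/
def InY (N len : ℕ) (F : Fin len → Submodule ℂ (Vsp N)) : Prop :=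
  (∀ i : Fin len, i.val = 0 → F i = ⊥) ∧
  ∀ i j : Fin len, j.val = i.val + 1 →
    Module.finrank ℂ ↥(F j) = j.val ∧ F i ≤ F j ∧
      Submodule.map (zMap N) (F j) ≤ F i

/-- Membership in the embedded type `D` Springer fiber `Fl^{2m-k,k}_D ⊆ Y_m`. -/
def InFlD (N m k : ℕ) (F : Fin (m+1) → Submodule ℂ (Vsp N)) : Prop :=
  InY N (m+1) F ∧ F (Fin.last m) ≤ Esub N (2*m-k) k ∧
    IsIsotropic (betaD N m k) (F (Fin.last m))

/-- Membership in the embedded type `C` Springer fiber `Fl^{2m-k-1,k-1}_C ⊆ Y_{m-1}`;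
here `G : Fin m → _` is the flag `(G_0,…,G_{m-1})`. -/
def InFlC (N m k : ℕ) (G : Fin m → Submodule ℂ (Vsp N)) : Prop :=
  InY N m G ∧ ∀ i : Fin m, i.val = m - 1 →
    G i ≤ Esub N (2*m-k-1) (k-1) ∧ IsIsotropic (betaC N m k) (G i)

/-! ### Cup diagrams -/

/-- A (dotted) cup diagram on the vertices `{1,…,m}`. -/
structure CupDiagram (m : ℕ) where
  cups : Finset (ℕ × ℕ)
  dottedCups : Finset (ℕ × ℕ)
  dottedRays : Finset ℕ
  cups_valid : ∀ p ∈ cups, 1 ≤ p.1 ∧ p.1 < p.2 ∧ p.2 ≤ m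
  cups_disjoint : ∀ p ∈ cups, ∀ q ∈ cups, p ≠ q →
    p.1 ≠ q.1 ∧ p.1 ≠ q.2 ∧ p.2 ≠ q.1 ∧ p.2 ≠ q.2
  noncrossing : ∀ p ∈ cups, ∀ l, p.1 < l → l < p.2 →
    ∃ q ∈ cups, (l = q.1 ∨ l = q.2) ∧ p.1 < q.1 ∧ q.2 < p.2
  dottedCups_sub : dottedCups ⊆ cups
  dottedRays_valid : ∀ r ∈ dottedRays, 1 ≤ r ∧ r ≤ m ∧ ∀ p ∈ cups, r ≠ p.1 ∧ r ≠ p.2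
  dottedCups_cond : ∀ p ∈ dottedCups,
    (∀ q ∈ cups, ¬(q.1 < p.1 ∧ p.2 < q.2)) ∧
    (∀ r, p.2 < r → r ≤ m → ∃ q ∈ cups, r = q.1 ∨ r = q.2)
  dottedRays_cond : ∀ r ∈ dottedRays, ∀ r', r < r' → r' ≤ m →
    ∃ q ∈ cups, r' = q.1 ∨ r' = q.2

/-- The vertex `v` carries a ray of the cup diagram `a`. -/
def CupDiagram.HasRay {m : ℕ} (a : CupDiagram m) (v : ℕ) : Prop :=
  1 ≤ v ∧ v ≤ m ∧ ∀ p ∈ a.cups, v ≠ p.1 ∧ v ≠ p.2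

/-- The total number of dots of a cup diagram. -/
def CupDiagram.dots {m : ℕ} (a : CupDiagram m) : ℕ :=
  a.dottedCups.card + a.dottedRays.card

/-! ### The sets `T_a ⊆ (ℙ¹)^m` -/

/-- The subset `T_a ⊆ (ℙ¹)^m` attached to a cup diagram `a ∈ B^{2m-k,k}`
(tuples are `0`-indexed: the coordinate `l i` corresponds to the vertex `i+1`). -/
def Ta (m k : ℕ) (a : CupDiagram m) : Set (Fin m → Submodule ℂ C2) :=
  {l | (∀ i : Fin m, Module.finrank ℂ ↥(l i) = 1) ∧
       (∀ i j : Fin m, (i.val+1, j.val+1) ∈ a.cups → (i.val+1, j.val+1) ∉ a.dottedCups →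
          l j = (l i)ᗮ) ∧
       (∀ i j : Fin m, (i.val+1, j.val+1) ∈ a.dottedCups → l i = l j) ∧
       (if k = m then
          ∀ i : Fin m, a.HasRay (i.val+1) →
            (i.val+1 ∉ a.dottedRays → l i = Submodule.span ℂ {fStd}) ∧
            (i.val+1 ∈ a.dottedRays → l i = Submodule.span ℂ {eStd})
        else
          ∀ i : Fin m, a.HasRay (i.val+1) →
            ((∃ r, a.HasRay r ∧ i.val+1 < r) → l i = Submodule.span ℂ {eStd}) ∧
            ((∀ r, a.HasRay r → r ≤ i.val+1) →
              l i = Submodule.span ℂ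
                {(if (m-k) % 2 = 0 then (1:ℂ) else Complex.I) • eStd +
                 (if i.val+1 ∈ a.dottedRays then (1:ℂ) else (-1:ℂ)) • fStd}))}

/-- The compatibility `C(F_{i} ∩ F_{i-1}^⊥) = l_i` for all `1 ≤ i ≤ m`. -/
def Compat (N m : ℕ) (F : Fin (m+1) → Submodule ℂ (Vsp N))
    (l : Fin m → Submodule ℂ C2) : Prop :=
  ∀ i : Fin m, Submodule.map (Cmap N) (F i.succ ⊓ (F i.castSucc)ᗮ) = l i

/-! ### Spheres and the topological Springer fiber -/

abbrev E3 := EuclideanSpace ℝ (Fin 3)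
abbrev Sph : Type := ↥(Metric.sphere (0 : E3) 1)

/-- The point `p = (0,0,1)`. -/
def pPt : E3 := EuclideanSpace.single 2 1
/-- The point `q = (1,0,0)`. -/
def qPt : E3 := EuclideanSpace.single 0 1

/-- The submanifold `S_a ⊆ (S²)^m` attached to a cup diagram `a`
(tuples are `0`-indexed: the coordinate `x i` corresponds to the vertex `i+1`). -/
def Sa (m : ℕ) (a : CupDiagram m) : Set (Fin m → Sph) :=
  {x | (∀ i j : Fin m, (i.val+1, j.val+1) ∈ a.cups →
          ((i.val+1, j.val+1) ∉ a.dottedCups → (x i : E3) = -(x j : E3)) ∧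
          ((i.val+1, j.val+1) ∈ a.dottedCups → (x i : E3) = (x j : E3))) ∧
       (∀ i : Fin m, a.HasRay (i.val+1) →
          (i.val+1 ∈ a.dottedRays → (x i : E3) = pPt) ∧
          (i.val+1 ∉ a.dottedRays →
            ((∀ r, a.HasRay r → r ≤ i.val+1) → (x i : E3) = -pPt) ∧
            ((∃ r, a.HasRay r ∧ i.val+1 < r) → (x i : E3) = qPt)))}

/-! ### Circle diagrams -/

/-- The edge relation of the circle diagram `\bar a b`. -/
def EdgeRel (m : ℕ) (a b : CupDiagram m) (i j : ℕ) : Prop :=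
  (i, j) ∈ a.cups ∨ (j, i) ∈ a.cups ∨ (i, j) ∈ b.cups ∨ (j, i) ∈ b.cups

/-- Two vertices lie in the same connected component of the circle diagram. -/
def Reach (m : ℕ) (a b : CupDiagram m) : ℕ → ℕ → Prop :=
  Relation.ReflTransGen (EdgeRel m a b)

/-- The number of dots on the connected component of the vertex `v` in the
circle diagram `\bar a b`. -/
def compDots (m : ℕ) (a b : CupDiagram m) (v : ℕ) : ℕ :=
  {p : ℕ × ℕ | p ∈ a.dottedCups ∧ Reach m a b v p.1 ∧ Reach m a b v p.2}.ncard +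
  {p : ℕ × ℕ | p ∈ b.dottedCups ∧ Reach m a b v p.1 ∧ Reach m a b v p.2}.ncard +
  {r : ℕ | r ∈ a.dottedRays ∧ Reach m a b v r}.ncard +
  {r : ℕ | r ∈ b.dottedRays ∧ Reach m a b v r}.ncard

/-- The connected component of `v` in the circle diagram is closed, i.e. none of
its vertices carries a ray of `a` or of `b`. -/
def IsClosedCompAt (m : ℕ) (a b : CupDiagram m) (v : ℕ) : Prop :=
  ∀ w, Reach m a b v w → ¬ a.HasRay w ∧ ¬ b.HasRay w

/-- The number of closed connected components of the circle diagram `\bar a b`. -/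
def numClosed (m : ℕ) (a b : CupDiagram m) : ℕ :=
  {s : Set ℕ | ∃ v, 1 ≤ v ∧ v ≤ m ∧ IsClosedCompAt m a b v ∧
      s = {w | Reach m a b v w}}.ncard

/-! ### The diffeomorphism `γ_{n-k,k}` -/

/-- Stereographic projection `S² \ {p} → ℂ`. -/
def sigmaProj (v : E3) : ℂ :=
  Complex.ofReal (v 0 / (1 - v 2)) + Complex.I * Complex.ofReal (v 1 / (1 - v 2))

open scoped Classical in
/-- The map `γ : S² → ℙ¹` (extended to the ambient space `ℝ³`). -/
def gammaAmb (v : E3) : Submodule ℂ C2 :=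
  if v = pPt then Submodule.span ℂ {eStd}
  else Submodule.span ℂ {sigmaProj v • eStd + fStd}

/-- The coordinate swap `s(x,y,z) = (x,z,y)`. -/
def sSwap (v : E3) : E3 := WithLp.toLp 2 (fun j : Fin 3 => v (if j.val = 1 then (2 : Fin 3) else if j.val = 2 then 1 else 0))
/-- The coordinate swap `t(x,y,z) = (z,y,x)`. -/
def tSwap (v : E3) : E3 := WithLp.toLp 2 (fun j : Fin 3 => v (if j.val = 0 then (2 : Fin 3) else if j.val = 2 then 0 else 1))

/-- The diffeomorphism `γ_{n-k,k} : (S²)^m → (ℙ¹)^m`. -/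
def gammaNK (m k : ℕ) (x : Fin m → Sph) : Fin m → Submodule ℂ C2 := fun i =>
  if k = m then gammaAmb (x i)
  else if (m - k) % 2 = 1 then gammaAmb (tSwap (x i))
  else gammaAmb (sSwap (x i))

/-! ### Jordan types and special simultaneous Jordan systems -/

/-- The nilpotent endomorphism induced by `z` on the subquotient `W/F` has Jordan type
`(a,b)`, encoded via the dimensions of the kernels of its powers:
`dim ker((z̄)^j) = min(j,a) + min(j,b)` for all `j`. -/
def HasJordanTypeOn (N : ℕ) (W F : Submodule ℂ (Vsp N)) (a b : ℕ) : Prop :=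
  ∀ j : ℕ, Module.finrank ℂ ↥(W ⊓ Submodule.comap (zMap N ^ j) F)
    = min j a + min j b + Module.finrank ℂ ↥F

/-- A special simultaneous Jordan system at level `i` for the subspace `Fi = F_i`
(Definition of Ehrig–Stroppel–Wilbert, Definition 4.4 of the paper). -/
def SpecialSJS (N m k : ℕ) (Fi : Submodule ℂ (Vsp N)) (i : ℕ) (ev fv : ℕ → Vsp N) : Prop :=
  (∀ j, 1 ≤ j → j + 1 ≤ m - i → zMap N (ev (j+1)) = ev j ∧ zMap N (fv (j+1)) = fv j) ∧
  (zMap N (ev 1) ∈ Fi ∧ zMap N (fv 1) ∈ Fi) ∧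
  (∀ j, 1 ≤ j → j ≤ m - i → ev j ∈ perpD N m k Fi ∧ fv j ∈ perpD N m k Fi) ∧
  (∀ j, 1 ≤ j → j ≤ m - i - 1 → ev j ∈ perpC N m k Fi ∧ fv j ∈ perpC N m k Fi) ∧
  LinearIndependent ℂ (fun s : Fin (m-i) ⊕ Fin (m-i) =>
    (Submodule.Quotient.mk (Sum.elim (fun t => ev (t.val+1)) (fun t => fv (t.val+1)) s) :
      Vsp N ⧸ Fi)) ∧
  (perpD N m k Fi
     = Fi ⊔ Submodule.span ℂ ((ev '' Set.Icc 1 (m-i)) ∪ (fv '' Set.Icc 1 (m-i)))) ∧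
  (perpC N m k Fi
     = Fi ⊔ Submodule.span ℂ ((ev '' Set.Icc 1 (m-i-1)) ∪ (fv '' Set.Icc 1 (m-i-1)))) ∧
  (∀ j j', 1 ≤ j → j ≤ m-i → 1 ≤ j' → j' ≤ m-i →
      betaD N m k (fv j) (ev j') = (if j + j' = m - i + 1 then (-1:ℂ)^(j-1) else 0) ∧
      betaD N m k (ev j) (ev j') = 0 ∧ betaD N m k (fv j) (fv j') = 0) ∧
  (∀ j j', 1 ≤ j → j ≤ m-i-1 → 1 ≤ j' → j' ≤ m-i-1 →
      betaC N m k (fv j) (ev j') = (if j + j' = m - i then (-1:ℂ)^(j-1) else 0) ∧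
      betaC N m k (ev j') (fv j) = -(if j + j' = m - i then (-1:ℂ)^(j-1) else 0) ∧
      betaC N m k (ev j) (ev j') = 0 ∧ betaC N m k (fv j) (fv j') = 0) ∧
  (∀ j j', 1 ≤ j → j ≤ m-i → 1 ≤ j' → j' ≤ m-i →
      (inner ℂ (ev j) (ev j') : ℂ) = (if j = j' then 1 else 0) ∧
      (inner ℂ (fv j) (fv j') : ℂ) = (if j = j' then 1 else 0) ∧
      (inner ℂ (ev j) (fv j') : ℂ) = 0) ∧
  (∀ j, 1 ≤ j → j ≤ m-i → ev j ∈ Fiᗮ ∧ fv j ∈ Fiᗮ) ∧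
  (∀ j, 2 ≤ j → j ≤ m-i → Cmap N (ev j) = Cmap N (zMap N (ev j)) ∧
      Cmap N (fv j) = Cmap N (zMap N (fv j)))

/-! ### Auxiliary lemmas for Statement 10 -/

section Statement10Aux

variable {N : ℕ}

/-- Same-block predicate. -/
def SB (N : ℕ) (p q : Fin (2*N)) : Prop := (p.val < N ∧ q.val < N) ∨ (N ≤ p.val ∧ N ≤ q.val)

instance (p q : Fin (2*N)) : Decidable (SB N p q) := by unfold SB; infer_instance

lemma zMap_apply' (v : Vsp N) (j : Fin (2*N)) :
    zMap N v j = if h : j.val + 1 < 2*N ∧ j.val + 1 ≠ N then v ⟨j.val+1, h.1⟩ else 0 := rfl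

lemma Cmap_apply' (v : Vsp N) (j : Fin 2) :
    Cmap N v j = ∑ i : Fin N, v (cIdx N j i) := rfl

lemma zpow_apply (a : ℕ) (v : Vsp N) (j : Fin (2*N)) :
    (zMap N ^ a) v j =
      if h : j.val + a < N ∨ (N ≤ j.val ∧ j.val + a < 2*N)
      then v ⟨j.val + a, by omega⟩ else 0 := by
  induction a generalizing v with
  | zero =>
    have hj := j.isLt
    rw [dif_pos (by omega)]
    simp
  | succ a ih =>
    rw [pow_succ, Module.End.mul_apply, ih (zMap N v)]
    have hj := j.isLt
    by_cases h : j.val + a < N ∨ (N ≤ j.val ∧ j.val + a < 2*N)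
    · rw [dif_pos h, zMap_apply']
      by_cases h2 : j.val + (a+1) < N ∨ (N ≤ j.val ∧ j.val + (a+1) < 2*N)
      · rw [dif_pos (by simp only [Fin.val_mk]; omega), dif_pos h2]
        exact congrArg v (Fin.ext (by simp only [Fin.val_mk]; omega))
      · rw [dif_neg (by simp only [Fin.val_mk]; omega), dif_neg h2]
    · rw [dif_neg h, dif_neg (by omega)]

lemma sum_split {M : Type*} [AddCommMonoid M] (g : Fin (2*N) → M) :
    ∑ p, g p = (∑ i : Fin N, g ⟨i.val, by omega⟩) + ∑ i : Fin N, g ⟨N + i.val, by omega⟩ := by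
  rw [← Equiv.sum_comp (finCongr (two_mul N).symm) g, Fin.sum_univ_add]
  rfl

lemma shift_reindex (g : Fin (2*N) → ℂ) (q : Fin (2*N)) :
    ∑ p : Fin (2*N), (if SB N p q ∧ q.val < p.val then g p else 0)
      = ∑ a ∈ Finset.range (2*N),
          (if h : q.val + (a+1) < N ∨ (N ≤ q.val ∧ q.val + (a+1) < 2*N)
           then g ⟨q.val+(a+1), by omega⟩ else 0) := by
  have hq := q.isLt
  have h1 : ∀ a : ℕ, (if h : q.val + (a+1) < N ∨ (N ≤ q.val ∧ q.val + (a+1) < 2*N)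
           then g ⟨q.val+(a+1), by omega⟩ else 0)
      = (if (q.val + (a+1) < N ∨ (N ≤ q.val ∧ q.val + (a+1) < 2*N))
           then g ⟨min (q.val+(a+1)) (2*N-1), by omega⟩ else 0) := by
    intro a
    by_cases h : q.val + (a+1) < N ∨ (N ≤ q.val ∧ q.val + (a+1) < 2*N)
    · rw [dif_pos h, if_pos h]
      exact congrArg g (Fin.ext (by simp only [Fin.val_mk]; omega))
    · rw [dif_neg h, if_neg h]
  simp only [h1]
  rw [← Finset.sum_filter, ← Finset.sum_filter]
  apply Finset.sum_nbij' (i := fun p => p.val - q.val - 1)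
      (j := fun a => (⟨min (q.val+(a+1)) (2*N-1), by omega⟩ : Fin (2*N)))
  · intro p hp
    simp only [Finset.mem_filter, Finset.mem_univ, true_and, Finset.mem_range] at hp ⊢
    unfold SB at hp; omega
  · intro a ha
    simp only [Finset.mem_filter, Finset.mem_range, Finset.mem_univ, true_and] at ha ⊢
    unfold SB; simp only [Fin.val_mk]; omega
  · intro p hp
    simp only [Finset.mem_filter, Finset.mem_univ, true_and] at hp
    unfold SB at hp
    apply Fin.ext; simp only [Fin.val_mk]; omega
  · intro a ha
    simp only [Finset.mem_filter, Finset.mem_range] at ha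
    simp only [Fin.val_mk]; omega
  · intro p hp
    simp only [Finset.mem_filter, Finset.mem_univ, true_and] at hp
    unfold SB at hp
    exact congrArg g (Fin.ext (by simp only [Fin.val_mk]; omega))

lemma sum_coord {ι : Type*} (s : Finset ι) (v : ι → Vsp N) (q : Fin (2*N)) :
    (∑ a ∈ s, v a) q = ∑ a ∈ s, v a q := by
  classical
  induction s using Finset.cons_induction with
  | empty => simp
  | cons a s ha ih => rw [Finset.sum_cons, Finset.sum_cons, PiLp.add_apply, ih]

lemma zpow_mem (U : Submodule ℂ (Vsp N)) (hzU : Submodule.map (zMap N) U ≤ U)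
    (a : ℕ) (w : Vsp N) (hw : w ∈ U) : (zMap N ^ a) w ∈ U := by
  induction a with
  | zero => simpa using hw
  | succ a ih =>
    rw [pow_succ', Module.End.mul_apply]
    exact hzU ⟨_, ih, rfl⟩

lemma blk_expand (v : Vsp N) (j : Fin 2) :
    Cmap N v j = ∑ p : Fin (2*N), (if (j.val = 0 ↔ p.val < N) then v p else 0) := by
  rw [Cmap_apply',
    sum_split (g := fun p : Fin (2*N) => (if (j.val = 0 ↔ p.val < N) then v p else 0))]
  by_cases hj : j.val = 0
  · have h1 : ∀ (i : Fin N) (w : Fin (2*N)), w.val = i.val →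
        (if (j.val = 0 ↔ w.val < N) then v w else 0) = v (cIdx N j i) := by
      intro i w hw
      have hi := i.isLt
      rw [if_pos (by omega)]
      exact congrArg v (Fin.ext (by simp [cIdx, hj, hw]))
    have h2 : ∀ (i : Fin N) (w : Fin (2*N)), w.val = N + i.val →
        (if (j.val = 0 ↔ w.val < N) then v w else 0) = 0 := by
      intro i w hw
      rw [if_neg (by omega)]
    have e1 : (∑ i : Fin N, (if j.val = 0 ↔ ((⟨i.val, by have := i.isLt; omega⟩ : Fin (2*N))).val < N
            then v (⟨i.val, by have := i.isLt; omega⟩ : Fin (2*N)) else 0))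
        = ∑ i : Fin N, v (cIdx N j i) :=
      Finset.sum_congr rfl (fun i _ => h1 i ⟨i.val, by have := i.isLt; omega⟩ rfl)
    have e2 : (∑ i : Fin N, (if j.val = 0 ↔ ((⟨N + i.val, by have := i.isLt; omega⟩ : Fin (2*N))).val < N
            then v (⟨N + i.val, by have := i.isLt; omega⟩ : Fin (2*N)) else 0))
        = ∑ _i : Fin N, (0:ℂ) :=
      Finset.sum_congr rfl (fun i _ => h2 i ⟨N + i.val, by have := i.isLt; omega⟩ rfl)
    rw [e1, e2]
    simp
  · have h1 : ∀ (i : Fin N) (w : Fin (2*N)), w.val = i.val →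
        (if (j.val = 0 ↔ w.val < N) then v w else 0) = 0 := by
      intro i w hw
      have hi := i.isLt
      rw [if_neg (by omega)]
    have h2 : ∀ (i : Fin N) (w : Fin (2*N)), w.val = N + i.val →
        (if (j.val = 0 ↔ w.val < N) then v w else 0) = v (cIdx N j i) := by
      intro i w hw
      rw [if_pos (by omega)]
      exact congrArg v (Fin.ext (by simp [cIdx, hj, hw]))
    have e1 : (∑ i : Fin N, (if j.val = 0 ↔ ((⟨i.val, by have := i.isLt; omega⟩ : Fin (2*N))).val < N
            then v (⟨i.val, by have := i.isLt; omega⟩ : Fin (2*N)) else 0))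
        = ∑ _i : Fin N, (0:ℂ) :=
      Finset.sum_congr rfl (fun i _ => h1 i ⟨i.val, by have := i.isLt; omega⟩ rfl)
    have e2 : (∑ i : Fin N, (if j.val = 0 ↔ ((⟨N + i.val, by have := i.isLt; omega⟩ : Fin (2*N))).val < N
            then v (⟨N + i.val, by have := i.isLt; omega⟩ : Fin (2*N)) else 0))
        = ∑ i : Fin N, v (cIdx N j i) :=
      Finset.sum_congr rfl (fun i _ => h2 i ⟨N + i.val, by have := i.isLt; omega⟩ rfl)
    rw [e1, e2]
    simp

lemma key_inner (U : Submodule ℂ (Vsp N)) (hzU : Submodule.map (zMap N) U ≤ U)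
    (x y : Vsp N) (hx : x ∈ Submodule.comap (zMap N) U ⊓ Uᗮ)
    (hy : y ∈ Submodule.comap (zMap N) U ⊓ Uᗮ) :
    (inner ℂ (Cmap N x) (Cmap N y) : ℂ) = inner ℂ x y := by
  obtain ⟨hx1, hx2⟩ := hx
  obtain ⟨hy1, hy2⟩ := hy
  have horthy : ∀ w ∈ U, (inner ℂ w y : ℂ) = 0 := (Submodule.mem_orthogonal U y).1 hy2
  have horthx : ∀ w ∈ U, (inner ℂ w x : ℂ) = 0 := (Submodule.mem_orthogonal U x).1 hx2
  -- the two "telescoped" vectors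
  set u : Vsp N := ∑ a ∈ Finset.range (2*N), (zMap N ^ (a+1)) x with hu_def
  set u' : Vsp N := ∑ a ∈ Finset.range (2*N), (zMap N ^ (a+1)) y with hu'_def
  have hu : u ∈ U := Submodule.sum_mem _ (fun a _ => by
    rw [pow_succ, Module.End.mul_apply]
    exact zpow_mem U hzU a _ (Submodule.mem_comap.1 hx1))
  have hu' : u' ∈ U := Submodule.sum_mem _ (fun a _ => by
    rw [pow_succ, Module.End.mul_apply]
    exact zpow_mem U hzU a _ (Submodule.mem_comap.1 hy1))
  have hucoord : ∀ (w : Vsp N) (q : Fin (2*N)),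
      (∑ a ∈ Finset.range (2*N), (zMap N ^ (a+1)) w) q
        = ∑ p : Fin (2*N), (if SB N p q ∧ q.val < p.val then w p else 0) := by
    intro w q
    rw [sum_coord, shift_reindex w q]
    exact Finset.sum_congr rfl (fun a _ => by rw [zpow_apply])
  -- expand the inner products
  simp only [PiLp.inner_apply, RCLike.inner_apply']
  have hexp : ∀ j : Fin 2, (starRingEnd ℂ) (Cmap N x j) * (Cmap N y j)
      = ∑ p : Fin (2*N), ∑ q : Fin (2*N),
          (if (j.val = 0 ↔ p.val < N) then (starRingEnd ℂ) (x p) else 0) *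
          (if (j.val = 0 ↔ q.val < N) then y q else 0) := by
    intro j
    rw [blk_expand x j, blk_expand y j, map_sum, Finset.sum_mul_sum]
    apply Finset.sum_congr rfl; intro p _
    apply Finset.sum_congr rfl; intro q _
    congr 1
    rw [apply_ite (starRingEnd ℂ), map_zero]
  have hptq : ∀ p : Fin (2*N), ∀ q : Fin (2*N),
      ((if ((0:Fin 2).val = 0 ↔ p.val < N) then (starRingEnd ℂ) (x p) else 0) *
        (if ((0:Fin 2).val = 0 ↔ q.val < N) then y q else 0) +
       (if ((1:Fin 2).val = 0 ↔ p.val < N) then (starRingEnd ℂ) (x p) else 0) *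
        (if ((1:Fin 2).val = 0 ↔ q.val < N) then y q else 0))
      = (if q = p then (starRingEnd ℂ) (x p) * y p else 0)
        + (if SB N p q ∧ q.val < p.val then (starRingEnd ℂ) (x p) * y q else 0)
        + (if SB N q p ∧ p.val < q.val then (starRingEnd ℂ) (x p) * y q else 0) := by
    intro p q
    have hp := p.isLt; have hq := q.isLt
    by_cases hqp : q = p
    · subst hqp
      rw [if_pos rfl]
      simp only [SB, Fin.val_zero, Fin.val_one, (show (((0:ℕ) = 0)) = True by simp),
        (show (((1:ℕ) = 0)) = False by simp), true_iff, false_iff]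
      split_ifs <;> first | ring1 | omega | (exfalso; omega) | grind
    · have hne : q.val ≠ p.val := fun h => hqp (Fin.ext h)
      rw [if_neg hqp]
      simp only [SB, Fin.val_zero, Fin.val_one, (show (((0:ℕ) = 0)) = True by simp),
        (show (((1:ℕ) = 0)) = False by simp), true_iff, false_iff]
      split_ifs <;> first | ring1 | omega | (exfalso; omega) | grind
  have htot : (∑ j : Fin 2, (starRingEnd ℂ) (Cmap N x j) * (Cmap N y j))
      = ∑ p : Fin (2*N), ∑ q : Fin (2*N),
          ((if q = p then (starRingEnd ℂ) (x p) * y p else 0)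
            + (if SB N p q ∧ q.val < p.val then (starRingEnd ℂ) (x p) * y q else 0)
            + (if SB N q p ∧ p.val < q.val then (starRingEnd ℂ) (x p) * y q else 0)) := by
    rw [Fin.sum_univ_two, hexp 0, hexp 1, ← Finset.sum_add_distrib]
    refine Finset.sum_congr rfl (fun p _ => ?_)
    rw [← Finset.sum_add_distrib]
    exact Finset.sum_congr rfl (fun q _ => hptq p q)
  have hdiag : (∑ p : Fin (2*N), ∑ q : Fin (2*N),
      (if q = p then (starRingEnd ℂ) (x p) * y p else 0))
        = ∑ p : Fin (2*N), (starRingEnd ℂ) (x p) * y p := by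
    apply Finset.sum_congr rfl (fun p _ => ?_)
    simp
  have hmid : (∑ p : Fin (2*N), ∑ q : Fin (2*N),
      (if SB N p q ∧ q.val < p.val then (starRingEnd ℂ) (x p) * y q else 0)) = 0 := by
    rw [Finset.sum_comm]
    have hqq : ∀ q : Fin (2*N),
        (∑ p : Fin (2*N), (if SB N p q ∧ q.val < p.val then (starRingEnd ℂ) (x p) * y q else 0))
          = (starRingEnd ℂ) (u q) * y q := by
      intro q
      have h1 : ∀ p : Fin (2*N),
          (if SB N p q ∧ q.val < p.val then (starRingEnd ℂ) (x p) * y q else 0)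
            = (if SB N p q ∧ q.val < p.val then (starRingEnd ℂ) (x p) else 0) * y q := by
        intro p; split_ifs <;> simp
      simp only [h1]
      rw [← Finset.sum_mul]
      congr 1
      have h2 : u q = ∑ p : Fin (2*N), (if SB N p q ∧ q.val < p.val then x p else 0) :=
        hucoord x q
      rw [h2, map_sum]
      exact Finset.sum_congr rfl (fun p _ => by rw [apply_ite (starRingEnd ℂ), map_zero])
    simp only [hqq]
    have h3 : (inner ℂ u y : ℂ) = 0 := horthy u hu
    simpa [PiLp.inner_apply, RCLike.inner_apply, mul_comm] using h3
  have hright : (∑ p : Fin (2*N), ∑ q : Fin (2*N),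
      (if SB N q p ∧ p.val < q.val then (starRingEnd ℂ) (x p) * y q else 0)) = 0 := by
    have hpp : ∀ p : Fin (2*N),
        (∑ q : Fin (2*N), (if SB N q p ∧ p.val < q.val then (starRingEnd ℂ) (x p) * y q else 0))
          = (starRingEnd ℂ) (x p) * u' p := by
      intro p
      have h1 : ∀ q : Fin (2*N),
          (if SB N q p ∧ p.val < q.val then (starRingEnd ℂ) (x p) * y q else 0)
            = (starRingEnd ℂ) (x p) * (if SB N q p ∧ p.val < q.val then y q else 0) := by
        intro q; split_ifs <;> simp
      simp only [h1]
      rw [← Finset.mul_sum]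
      congr 1
      exact (hucoord y p).symm
    simp only [hpp]
    have h3 : (inner ℂ x u' : ℂ) = 0 := by
      rw [← inner_conj_symm, horthx u' hu', map_zero]
    simpa [PiLp.inner_apply, RCLike.inner_apply, mul_comm] using h3
  rw [htot]
  simp only [Finset.sum_add_distrib]
  rw [hdiag, hmid, hright, add_zero, add_zero]

end Statement10Aux

/-- For a `z`-stable subspace `U ⊆ im z` of `ℂ^{2N}`, the subspace
`z⁻¹U ∩ U^⊥` is two-dimensional and `C` restricts to a unitary isomorphism
`z⁻¹U ∩ U^⊥ → ℂ²`. -/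
theorem statement10 (N : ℕ) (hN : 2 ≤ N) (U : Submodule ℂ (Vsp N))
    (hzU : Submodule.map (zMap N) U ≤ U) (hU : U ≤ LinearMap.range (zMap N)) :
    Module.finrank ℂ ↥(Submodule.comap (zMap N) U ⊓ Uᗮ) = 2 ∧
    Function.Bijective
      (fun x : ↥(Submodule.comap (zMap N) U ⊓ Uᗮ) => Cmap N (x : Vsp N)) ∧
    ∀ x y : ↥(Submodule.comap (zMap N) U ⊓ Uᗮ),
      (inner ℂ (Cmap N (x : Vsp N)) (Cmap N (y : Vsp N)) : ℂ)
        = inner ℂ (x : Vsp N) (y : Vsp N) := by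
  have h2N : 0 < 2*N := by omega
  -- the kernel of z
  set k0 : Vsp N := EuclideanSpace.single (⟨0, by omega⟩ : Fin (2*N)) 1 with hk0
  set kN : Vsp N := EuclideanSpace.single (⟨N, by omega⟩ : Fin (2*N)) 1 with hkN
  have hkerspan : LinearMap.ker (zMap N) = Submodule.span ℂ (Set.range ![k0, kN]) := by
    apply le_antisymm
    · intro v hv
      have hv0 : zMap N v = 0 := LinearMap.mem_ker.1 hv
      have hvj : ∀ p : Fin (2*N), 1 ≤ p.val → p.val ≠ N → v p = 0 := by
        intro p hp1 hpN
        have h := congrFun (congrArg WithLp.ofLp hv0) ⟨p.val - 1, by omega⟩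
        rw [zMap_apply'] at h
        rw [dif_pos (by simp only [Fin.val_mk]; omega)] at h
        have : v ⟨(p.val - 1) + 1, by omega⟩ = v p := congrArg v (Fin.ext (by
          simp only [Fin.val_mk]; omega))
        rw [this] at h
        exact h
      have hrepr : v = v ⟨0, by omega⟩ • k0 + v ⟨N, by omega⟩ • kN := by
        ext j
        rw [PiLp.add_apply, PiLp.smul_apply, PiLp.smul_apply, hk0, hkN,
          EuclideanSpace.single_apply, EuclideanSpace.single_apply]
        by_cases hj0 : j = (⟨0, by omega⟩ : Fin (2*N))
        · rw [if_pos hj0, if_neg (by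
            rw [hj0]
            intro hc
            have := congrArg Fin.val hc
            simp only [Fin.val_mk] at this
            omega)]
          subst hj0; simp
        · rw [if_neg hj0]
          by_cases hjN : j = (⟨N, by omega⟩ : Fin (2*N))
          · rw [if_pos hjN]; subst hjN; simp
          · rw [if_neg hjN]
            have hj0' : j.val ≠ 0 := fun h => hj0 (Fin.ext (by simp [h]))
            have hjN' : j.val ≠ N := fun h => hjN (Fin.ext (by simp [h]))
            simp only [smul_zero, add_zero, smul_eq_mul, mul_zero]
            exact hvj j (by omega) hjN'
      rw [hrepr]
      exact Submodule.add_mem _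
        (Submodule.smul_mem _ _ (Submodule.subset_span ⟨0, rfl⟩))
        (Submodule.smul_mem _ _ (Submodule.subset_span ⟨1, rfl⟩))
    · rw [Submodule.span_le]
      have hsingle : ∀ (t : Fin (2*N)),
          (∀ j : Fin (2*N), j.val + 1 < 2*N → j.val + 1 ≠ N → j.val + 1 ≠ t.val) →
          EuclideanSpace.single t (1:ℂ) ∈ LinearMap.ker (zMap N) := by
        intro t ht
        rw [LinearMap.mem_ker]
        ext j
        rw [zMap_apply']
        by_cases h : j.val + 1 < 2*N ∧ j.val + 1 ≠ N
        · rw [dif_pos h, EuclideanSpace.single_apply]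
          rw [if_neg (fun hc => by
            have := congrArg Fin.val hc
            simp only [Fin.val_mk] at this
            exact ht j h.1 h.2 this)]
          rfl
        · rw [dif_neg h]; rfl
      rintro w ⟨i, rfl⟩
      fin_cases i
      · exact hsingle _ (fun j _ _ => by simp only [Fin.val_mk]; omega)
      · exact hsingle _ (fun j _ _ => by simp only [Fin.val_mk]; omega)
  have hk_indep : LinearIndependent ℂ ![k0, kN] := by
    rw [linearIndependent_fin2]
    constructor
    · intro h
      simp only [Matrix.cons_val_one, Matrix.head_cons, Matrix.cons_val_zero] at h
      have h2 := congrFun (congrArg WithLp.ofLp h) (⟨N, by omega⟩ : Fin (2*N))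
      rw [hkN, EuclideanSpace.single_apply, if_pos rfl] at h2
      exact one_ne_zero (h2.trans rfl)
    · intro a h
      simp only [Matrix.cons_val_zero, Matrix.cons_val_one, Matrix.head_cons] at h
      have h2 := congrFun (congrArg WithLp.ofLp h) (⟨0, by omega⟩ : Fin (2*N))
      rw [hk0, EuclideanSpace.single_apply, if_pos rfl, PiLp.smul_apply, hkN,
        EuclideanSpace.single_apply, if_neg (fun hc => by
          have := congrArg Fin.val hc
          simp only [Fin.val_mk] at this
          omega)] at h2
      simp at h2
  have hkerrank : Module.finrank ℂ ↥(LinearMap.ker (zMap N)) = 2 := by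
    rw [hkerspan, finrank_span_eq_card hk_indep]
    simp
  -- rank of the preimage
  have hUle : U ≤ Submodule.comap (zMap N) U := Submodule.map_le_iff_le_comap.1 hzU
  have hkerle : LinearMap.ker (zMap N) ≤ Submodule.comap (zMap N) U := by
    intro v hv
    rw [Submodule.mem_comap, LinearMap.mem_ker.1 hv]
    exact U.zero_mem
  have hrankA : Module.finrank ℂ ↥(Submodule.comap (zMap N) U)
      = Module.finrank ℂ ↥U + 2 := by
    have h1 := LinearMap.finrank_range_add_finrank_ker
      ((zMap N).domRestrict (Submodule.comap (zMap N) U))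
    rw [LinearMap.range_domRestrict, LinearMap.ker_domRestrict] at h1
    have h2 : Submodule.map (zMap N) (Submodule.comap (zMap N) U) = U := by
      rw [Submodule.map_comap_eq, inf_eq_right.2 hU]
    have h3 : Module.finrank ℂ
        ↥(Submodule.comap (Submodule.comap (zMap N) U).subtype (LinearMap.ker (zMap N)))
        = Module.finrank ℂ ↥(LinearMap.ker (zMap N)) :=
      (Submodule.comapSubtypeEquivOfLe hkerle).finrank_eq
    rw [h2, h3, hkerrank] at h1
    omega
  have hrankW : Module.finrank ℂ ↥(Submodule.comap (zMap N) U ⊓ Uᗮ) = 2 := by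
    have h1 := Submodule.finrank_add_inf_finrank_orthogonal hUle
    rw [inf_comm] at h1
    omega
  refine ⟨hrankW, ?_, fun x y => key_inner U hzU x.val y.val x.2 y.2⟩
  -- bijectivity
  have hinj : Function.Injective
      (fun x : ↥(Submodule.comap (zMap N) U ⊓ Uᗮ) => Cmap N (x : Vsp N)) := by
    intro a b hab
    have hab' : Cmap N (a : Vsp N) = Cmap N (b : Vsp N) := hab
    have hsub : ((a - b : ↥(Submodule.comap (zMap N) U ⊓ Uᗮ)) : Vsp N)
        = (a : Vsp N) - (b : Vsp N) := rfl
    have hzero : Cmap N ((a - b : ↥(Submodule.comap (zMap N) U ⊓ Uᗮ)) : Vsp N) = 0 := by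
      rw [hsub, map_sub, hab', sub_self]
    have hk := key_inner U hzU _ _ (a - b).2 (a - b).2
    rw [hzero, inner_zero_left] at hk
    have h0 : ((a - b : ↥(Submodule.comap (zMap N) U ⊓ Uᗮ)) : Vsp N) = 0 :=
      inner_self_eq_zero.1 hk.symm
    exact sub_eq_zero.1 (Subtype.ext h0)
  have hsurj : Function.Surjective
      (fun x : ↥(Submodule.comap (zMap N) U ⊓ Uᗮ) => Cmap N (x : Vsp N)) := by
    have heq : (fun x : ↥(Submodule.comap (zMap N) U ⊓ Uᗮ) => Cmap N (x : Vsp N))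
        = ⇑((Cmap N).domRestrict (Submodule.comap (zMap N) U ⊓ Uᗮ)) := rfl
    rw [heq] at hinj ⊢
    refine (LinearMap.injective_iff_surjective_of_finrank_eq_finrank ?_).1 hinj
    rw [hrankW, finrank_euclideanSpace_fin]
  exact ⟨hinj, hsurj⟩

end Spr
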